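/- arXiv:1311.2097 — 8 statements merged into one kernel-verified Lean document; each statement's English description precedes it below -/
import Mathlib

section
/- Suppose u : ℝ → ℝ is continuous and strictly increasing, x₀ ∈ ℝ, and the utility-based shortfall of X equals m* ∈ ℝ, i.e., sup{ m ∈ ℝ | Σ_i μ(i) u(X(i) − m) ≥ x₀ } = m* with the supremum over a nonempty set bounded above. Then Σ_i μ(i) u(X(i) − m*) = x₀. -/
/-- If `u : ℝ → ℝ` is continuous and strictly increasing, and the
utility-based shortfall of `X` equals `m*`, i.e.
`sup { m | ∑ i, μ i * u (X i − m) ≥ x₀ } = m*` where the supremum is over a nonempty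
set that is bounded above, then `∑ i, μ i * u (X i − m*) = x₀`. -/
theorem stmt_4 {I : Type*} [Fintype I] [Nonempty I]
    (μ : I → ℝ) (hμ0 : ∀ i, 0 ≤ μ i) (hμ1 : ∑ i, μ i = 1)
    (u : ℝ → ℝ) (hu_cont : Continuous u) (hu_mono : StrictMono u)
    (x₀ : ℝ) (X : I → ℝ) (mstar : ℝ)
    (hne : {m : ℝ | x₀ ≤ ∑ i, μ i * u (X i - m)}.Nonempty)
    (hbdd : BddAbove {m : ℝ | x₀ ≤ ∑ i, μ i * u (X i - m)})
    (h : sSup {m : ℝ | x₀ ≤ ∑ i, μ i * u (X i - m)} = mstar) :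
    ∑ i, μ i * u (X i - mstar) = x₀ := by
  set f : ℝ → ℝ := fun m => ∑ i, μ i * u (X i - m) with hf_def
  have hf : Continuous f := by
    apply continuous_finset_sum
    intro i _
    exact continuous_const.mul (hu_cont.comp (continuous_const.sub continuous_id))
  have hS : IsClosed {m : ℝ | x₀ ≤ f m} := isClosed_le continuous_const hf
  have hmem : mstar ∈ {m : ℝ | x₀ ≤ f m} := h ▸ hS.csSup_mem hne hbdd
  have hge : x₀ ≤ f mstar := hmem
  rcases eq_or_lt_of_le hge with heq | hlt
  · exact heq.symm
  · exfalso
    have hnb : f ⁻¹' Set.Ioi x₀ ∈ nhds mstar :=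
      hf.continuousAt.preimage_mem_nhds (Ioi_mem_nhds hlt)
    rcases Metric.mem_nhds_iff.mp hnb with ⟨ε, hε, hball⟩
    have hmemS : mstar + ε / 2 ∈ {m : ℝ | x₀ ≤ f m} := by
      have : mstar + ε / 2 ∈ Metric.ball mstar ε := by
        rw [Metric.mem_ball, Real.dist_eq, add_sub_cancel_left,
          abs_of_pos (by linarith : (0:ℝ) < ε / 2)]
        linarith
      have h2 : f (mstar + ε / 2) ∈ Set.Ioi x₀ := hball this
      exact le_of_lt (Set.mem_Ioi.mp h2)
    have := le_csSup hbdd hmemS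
    rw [h] at this
    linarith
end

section
/- Suppose u : ℝ → ℝ is continuous and strictly increasing and u(y₀) = x₀ for some y₀ ∈ ℝ. Then the utility-based shortfall ρ is a valuation function: for every probability distribution μ on I, (monotonicity) if X(i) ≤ Y(i) for all i ∈ I then ρ(X) ≤ ρ(Y), and (translation invariance) ρ(X + y·𝟙) = ρ(X) + y for all y ∈ ℝ, where 𝟙 is the all-ones vector. -/
lemma aux_nonempty {I : Type*} [Fintype I] [Nonempty I]
    (μ : I → ℝ) (hμ0 : ∀ i, 0 ≤ μ i) (hμ1 : ∑ i, μ i = 1)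
    (u : ℝ → ℝ) (hu_mono : StrictMono u)
    (y₀ x₀ : ℝ) (hy₀ : u y₀ = x₀) (X : I → ℝ) :
    ({m : ℝ | x₀ ≤ ∑ i, μ i * u (X i - m)}).Nonempty := by
  obtain ⟨i₀, -, hi₀⟩ := Finset.exists_min_image Finset.univ X ⟨Classical.arbitrary I, Finset.mem_univ _⟩
  refine ⟨X i₀ - y₀, ?_⟩
  have h1 : ∀ i, x₀ ≤ u (X i - (X i₀ - y₀)) := by
    intro i
    rw [← hy₀]
    exact (hu_mono.le_iff_le).mpr (by have := hi₀ i (Finset.mem_univ i); linarith)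
  calc x₀ = ∑ i, μ i * x₀ := by rw [← Finset.sum_mul, hμ1, one_mul]
    _ ≤ ∑ i, μ i * u (X i - (X i₀ - y₀)) :=
      Finset.sum_le_sum fun i _ => mul_le_mul_of_nonneg_left (h1 i) (hμ0 i)

lemma aux_bdd {I : Type*} [Fintype I] [Nonempty I]
    (μ : I → ℝ) (hμ0 : ∀ i, 0 ≤ μ i) (hμ1 : ∑ i, μ i = 1)
    (u : ℝ → ℝ) (hu_mono : StrictMono u)
    (y₀ x₀ : ℝ) (hy₀ : u y₀ = x₀) (X : I → ℝ) :
    BddAbove {m : ℝ | x₀ ≤ ∑ i, μ i * u (X i - m)} := by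
  obtain ⟨i₁, -, hi₁⟩ := Finset.exists_max_image Finset.univ X ⟨Classical.arbitrary I, Finset.mem_univ _⟩
  refine ⟨X i₁ - y₀, fun m hm => ?_⟩
  have h2 : ∑ i, μ i * u (X i - m) ≤ u (X i₁ - m) := by
    calc ∑ i, μ i * u (X i - m) ≤ ∑ i, μ i * u (X i₁ - m) :=
          Finset.sum_le_sum fun i _ => mul_le_mul_of_nonneg_left
            ((hu_mono.le_iff_le).mpr (by have := hi₁ i (Finset.mem_univ i); linarith)) (hμ0 i)
      _ = u (X i₁ - m) := by rw [← Finset.sum_mul, hμ1, one_mul]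
  have h3 : u y₀ ≤ u (X i₁ - m) := by rw [hy₀]; exact le_trans hm h2
  have := (hu_mono.le_iff_le).mp h3
  linarith

/-- If `u : ℝ → ℝ` is continuous and strictly increasing with
`u y₀ = x₀`, then the utility-based shortfall
`ρ(X) = sup { m | ∑ i, μ i * u (X i − m) ≥ x₀ }` is a valuation function:
it is monotone and translation invariant. -/
theorem stmt_5 {I : Type*} [Fintype I] [Nonempty I]
    (μ : I → ℝ) (hμ0 : ∀ i, 0 ≤ μ i) (hμ1 : ∑ i, μ i = 1)
    (u : ℝ → ℝ) (hu_cont : Continuous u) (hu_mono : StrictMono u)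
    (y₀ x₀ : ℝ) (hy₀ : u y₀ = x₀) :
    (∀ X Y : I → ℝ, (∀ i, X i ≤ Y i) →
      sSup {m : ℝ | x₀ ≤ ∑ i, μ i * u (X i - m)} ≤
        sSup {m : ℝ | x₀ ≤ ∑ i, μ i * u (Y i - m)}) ∧
    (∀ (X : I → ℝ) (y : ℝ),
      sSup {m : ℝ | x₀ ≤ ∑ i, μ i * u (X i + y - m)} =
        sSup {m : ℝ | x₀ ≤ ∑ i, μ i * u (X i - m)} + y) := by
  constructor
  · intro X Y hXY
    refine csSup_le_csSup (aux_bdd μ hμ0 hμ1 u hu_mono y₀ x₀ hy₀ Y)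
      (aux_nonempty μ hμ0 hμ1 u hu_mono y₀ x₀ hy₀ X) ?_
    intro m hm
    refine le_trans hm (Finset.sum_le_sum fun i _ => mul_le_mul_of_nonneg_left
      ((hu_mono.le_iff_le).mpr (by have := hXY i; linarith)) (hμ0 i))
  · intro X y
    have himg : {m : ℝ | x₀ ≤ ∑ i, μ i * u (X i + y - m)} =
        (fun m => m + y) '' {m : ℝ | x₀ ≤ ∑ i, μ i * u (X i - m)} := by
      ext m
      constructor
      · intro hm
        refine ⟨m - y, ?_, by ring⟩
        have e : ∀ i : I, X i - (m - y) = X i + y - m := fun i => by ring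
        simp only [Set.mem_setOf_eq, e]
        exact hm
      · rintro ⟨m', hm', rfl⟩
        have e : ∀ i : I, X i + y - (m' + y) = X i - m' := fun i => by ring
        simp only [Set.mem_setOf_eq, e]
        exact hm'
    rw [himg]
    have := (OrderIso.addRight y).map_csSup'
      (aux_nonempty μ hμ0 hμ1 u hu_mono y₀ x₀ hy₀ X)
      (aux_bdd μ hμ0 hμ1 u hu_mono y₀ x₀ hy₀ X)
    simpa using this.symm
end

section
/- Suppose u : ℝ → ℝ is continuous, strictly increasing, concave, and u(y₀) = x₀ for some y₀ ∈ ℝ. Then the utility-based shortfall ρ is concave in its first argument: for all X, Y : I → ℝ and all α ∈ [0,1], ρ(αX + (1−α)Y) ≥ α ρ(X) + (1−α) ρ(Y). -/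
private lemma shortfall_aux {I : Type*} [Fintype I] [Nonempty I]
    (μ : I → ℝ) (hμ0 : ∀ i, 0 ≤ μ i) (hμ1 : ∑ i, μ i = 1)
    (u : ℝ → ℝ) (hu_mono : StrictMono u) (y₀ x₀ : ℝ) (hy₀ : u y₀ = x₀)
    (Z : I → ℝ) :
    {m : ℝ | x₀ ≤ ∑ i, μ i * u (Z i - m)}.Nonempty ∧
    BddAbove {m : ℝ | x₀ ≤ ∑ i, μ i * u (Z i - m)} := by
  have hx0 : ∑ i, μ i * x₀ = x₀ := by rw [← Finset.sum_mul, hμ1, one_mul]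
  constructor
  · refine ⟨Finset.univ.inf' Finset.univ_nonempty Z - y₀, ?_⟩
    have h1 : ∀ i, x₀ ≤ u (Z i - (Finset.univ.inf' Finset.univ_nonempty Z - y₀)) := by
      intro i
      rw [← hy₀]
      refine hu_mono.le_iff_le.2 ?_
      have := Finset.inf'_le Z (Finset.mem_univ i)
      linarith
    calc x₀ = ∑ i, μ i * x₀ := hx0.symm
    _ ≤ _ := Finset.sum_le_sum fun i _ => mul_le_mul_of_nonneg_left (h1 i) (hμ0 i)
  · obtain ⟨j, hj⟩ : ∃ j, 0 < μ j := by
      by_contra h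
      push_neg at h
      have : ∑ i, μ i ≤ 0 := Finset.sum_nonpos fun i _ => h i
      linarith
    refine ⟨Finset.univ.sup' Finset.univ_nonempty Z - y₀, fun m hm => ?_⟩
    by_contra hlt
    push_neg at hlt
    have h2 : ∀ i, u (Z i - m) < x₀ := by
      intro i
      rw [← hy₀]
      refine hu_mono ?_
      have := Finset.le_sup' Z (Finset.mem_univ i)
      linarith
    have hsum : ∑ i, μ i * u (Z i - m) < ∑ i, μ i * x₀ :=
      Finset.sum_lt_sum (fun i _ => mul_le_mul_of_nonneg_left (h2 i).le (hμ0 i))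
        ⟨j, Finset.mem_univ j, mul_lt_mul_of_pos_left (h2 j) hj⟩
    rw [hx0] at hsum
    exact absurd hm (not_le.2 hsum)

/-- If `u : ℝ → ℝ` is continuous, strictly increasing, concave, and
`u y₀ = x₀`, then the utility-based shortfall
`ρ(X) = sup { m | ∑ i, μ i * u (X i − m) ≥ x₀ }` is concave in `X`:
`ρ(αX + (1−α)Y) ≥ α ρ(X) + (1−α) ρ(Y)` for all `α ∈ [0,1]`. -/
theorem stmt_6 {I : Type*} [Fintype I] [Nonempty I]
    (μ : I → ℝ) (hμ0 : ∀ i, 0 ≤ μ i) (hμ1 : ∑ i, μ i = 1)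
    (u : ℝ → ℝ) (hu_cont : Continuous u) (hu_mono : StrictMono u)
    (hu_conc : ConcaveOn ℝ Set.univ u)
    (y₀ x₀ : ℝ) (hy₀ : u y₀ = x₀)
    (X Y : I → ℝ) (α : ℝ) (hα0 : 0 ≤ α) (hα1 : α ≤ 1) :
    α * sSup {m : ℝ | x₀ ≤ ∑ i, μ i * u (X i - m)} +
      (1 - α) * sSup {m : ℝ | x₀ ≤ ∑ i, μ i * u (Y i - m)} ≤
    sSup {m : ℝ | x₀ ≤ ∑ i, μ i * u (α * X i + (1 - α) * Y i - m)} := by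
  set A := {m : ℝ | x₀ ≤ ∑ i, μ i * u (X i - m)} with hA
  set B := {m : ℝ | x₀ ≤ ∑ i, μ i * u (Y i - m)} with hB
  set C := {m : ℝ | x₀ ≤ ∑ i, μ i * u (α * X i + (1 - α) * Y i - m)} with hC
  obtain ⟨hAne, hAbdd⟩ := shortfall_aux μ hμ0 hμ1 u hu_mono y₀ x₀ hy₀ X
  obtain ⟨hBne, hBbdd⟩ := shortfall_aux μ hμ0 hμ1 u hu_mono y₀ x₀ hy₀ Y
  obtain ⟨hCne, hCbdd⟩ := shortfall_aux μ hμ0 hμ1 u hu_mono y₀ x₀ hy₀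
    (fun i => α * X i + (1 - α) * Y i)
  have comb : ∀ m ∈ A, ∀ m' ∈ B, α * m + (1 - α) * m' ∈ C := by
    intro m hm m' hm'
    have hconc : ∀ i, α * u (X i - m) + (1 - α) * u (Y i - m') ≤
        u (α * X i + (1 - α) * Y i - (α * m + (1 - α) * m')) := by
      intro i
      have h := hu_conc.2 (Set.mem_univ (X i - m)) (Set.mem_univ (Y i - m'))
        hα0 (show (0:ℝ) ≤ 1 - α by linarith) (by ring)
      simp only [smul_eq_mul] at h
      have heq : α * (X i - m) + (1 - α) * (Y i - m')
          = α * X i + (1 - α) * Y i - (α * m + (1 - α) * m') := by ring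
      rw [heq] at h
      exact h
    have : x₀ ≤ ∑ i, μ i * (α * u (X i - m) + (1 - α) * u (Y i - m')) := by
      have heq : ∑ i, μ i * (α * u (X i - m) + (1 - α) * u (Y i - m'))
          = α * ∑ i, μ i * u (X i - m) + (1 - α) * ∑ i, μ i * u (Y i - m') := by
        rw [Finset.mul_sum, Finset.mul_sum, ← Finset.sum_add_distrib]
        exact Finset.sum_congr rfl fun i _ => by ring
      rw [heq]
      have h1 : x₀ ≤ ∑ i, μ i * u (X i - m) := hm
      have h2 : x₀ ≤ ∑ i, μ i * u (Y i - m') := hm'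
      nlinarith [mul_le_mul_of_nonneg_left h1 hα0,
        mul_le_mul_of_nonneg_left h2 (show (0:ℝ) ≤ 1 - α by linarith)]
    refine le_trans this (Finset.sum_le_sum fun i _ =>
      mul_le_mul_of_nonneg_left (hconc i) (hμ0 i))
  refine le_of_forall_pos_le_add fun ε hε => ?_
  obtain ⟨a, ha, halt⟩ := exists_lt_of_lt_csSup hAne
    (show sSup A - ε / 2 < sSup A by linarith)
  obtain ⟨b, hb, hblt⟩ := exists_lt_of_lt_csSup hBne
    (show sSup B - ε / 2 < sSup B by linarith)
  have hmem := le_csSup hCbdd (comb a ha b hb)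
  nlinarith [mul_le_mul_of_nonneg_left (show sSup A ≤ a + ε / 2 by linarith) hα0,
    mul_le_mul_of_nonneg_left (show sSup B ≤ b + ε / 2 by linarith)
      (show (0:ℝ) ≤ 1 - α by linarith)]
end

section
/- Suppose u : ℝ → ℝ is continuous, strictly increasing, convex, and u(y₀) = x₀ for some y₀ ∈ ℝ. Then the utility-based shortfall ρ is convex in its first argument: for all X, Y : I → ℝ and all α ∈ [0,1], ρ(αX + (1−α)Y) ≤ α ρ(X) + (1−α) ρ(Y). -/
/-- Any member of the shortfall acceptance set is bounded above. -/
lemma shortfall_mem_le {I : Type*} [Fintype I] [Nonempty I]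
    (μ : I → ℝ) (hμ0 : ∀ i, 0 ≤ μ i) (hμ1 : ∑ i, μ i = 1)
    (u : ℝ → ℝ) (hu_mono : StrictMono u)
    (y₀ x₀ : ℝ) (hy₀ : u y₀ = x₀)
    (W : I → ℝ) (m : ℝ) (hm : x₀ ≤ ∑ i, μ i * u (W i - m)) :
    m ≤ Finset.univ.sup' Finset.univ_nonempty W - y₀ := by
  by_contra h
  push_neg at h
  obtain ⟨i₀, hi₀⟩ : ∃ i, 0 < μ i := by
    by_contra hc
    push_neg at hc
    have : ∑ i, μ i = 0 := Finset.sum_eq_zero fun i _ => le_antisymm (hc i) (hμ0 i)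
    linarith [hμ1]
  have key : ∀ i, u (W i - m) < x₀ := by
    intro i
    have hWi : W i ≤ Finset.univ.sup' Finset.univ_nonempty W :=
      Finset.le_sup' W (Finset.mem_univ i)
    have : W i - m < y₀ := by linarith
    calc u (W i - m) < u y₀ := hu_mono this
      _ = x₀ := hy₀
  have hlt : ∑ i, μ i * u (W i - m) < ∑ i, μ i * x₀ := by
    apply Finset.sum_lt_sum
    · intro i _
      exact mul_le_mul_of_nonneg_left (key i).le (hμ0 i)
    · exact ⟨i₀, Finset.mem_univ i₀, mul_lt_mul_of_pos_left (key i₀) hi₀⟩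
  rw [← Finset.sum_mul, hμ1, one_mul] at hlt
  linarith

/-- The shortfall acceptance set is nonempty. -/
lemma shortfall_nonempty {I : Type*} [Fintype I] [Nonempty I]
    (μ : I → ℝ) (hμ0 : ∀ i, 0 ≤ μ i) (hμ1 : ∑ i, μ i = 1)
    (u : ℝ → ℝ) (hu_mono : StrictMono u)
    (y₀ x₀ : ℝ) (hy₀ : u y₀ = x₀)
    (W : I → ℝ) :
    (Finset.univ.inf' Finset.univ_nonempty W - y₀) ∈
      {m : ℝ | x₀ ≤ ∑ i, μ i * u (W i - m)} := by
  have key : ∀ i, x₀ ≤ u (W i - (Finset.univ.inf' Finset.univ_nonempty W - y₀)) := by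
    intro i
    have hWi : Finset.univ.inf' Finset.univ_nonempty W ≤ W i :=
      Finset.inf'_le W (Finset.mem_univ i)
    have : y₀ ≤ W i - (Finset.univ.inf' Finset.univ_nonempty W - y₀) := by linarith
    calc x₀ = u y₀ := hy₀.symm
      _ ≤ u _ := hu_mono.monotone this
  have : ∑ i, μ i * x₀ ≤ ∑ i, μ i * u (W i - (Finset.univ.inf' Finset.univ_nonempty W - y₀)) :=
    Finset.sum_le_sum fun i _ => mul_le_mul_of_nonneg_left (key i) (hμ0 i)
  rw [← Finset.sum_mul, hμ1, one_mul] at this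
  exact this

/-- If `u : ℝ → ℝ` is continuous, strictly increasing, convex, and
`u y₀ = x₀`, then the utility-based shortfall
`ρ(X) = sup { m | ∑ i, μ i * u (X i − m) ≥ x₀ }` is convex in `X`:
`ρ(αX + (1−α)Y) ≤ α ρ(X) + (1−α) ρ(Y)` for all `α ∈ [0,1]`. -/
theorem stmt_7 {I : Type*} [Fintype I] [Nonempty I]
    (μ : I → ℝ) (hμ0 : ∀ i, 0 ≤ μ i) (hμ1 : ∑ i, μ i = 1)
    (u : ℝ → ℝ) (hu_cont : Continuous u) (hu_mono : StrictMono u)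
    (hu_conv : ConvexOn ℝ Set.univ u)
    (y₀ x₀ : ℝ) (hy₀ : u y₀ = x₀)
    (X Y : I → ℝ) (α : ℝ) (hα0 : 0 ≤ α) (hα1 : α ≤ 1) :
    sSup {m : ℝ | x₀ ≤ ∑ i, μ i * u (α * X i + (1 - α) * Y i - m)} ≤
      α * sSup {m : ℝ | x₀ ≤ ∑ i, μ i * u (X i - m)} +
        (1 - α) * sSup {m : ℝ | x₀ ≤ ∑ i, μ i * u (Y i - m)} := by
  set SX := {m : ℝ | x₀ ≤ ∑ i, μ i * u (X i - m)} with hSX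
  set SY := {m : ℝ | x₀ ≤ ∑ i, μ i * u (Y i - m)} with hSY
  have hbX : BddAbove SX :=
    ⟨Finset.univ.sup' Finset.univ_nonempty X - y₀, fun m hm =>
      shortfall_mem_le μ hμ0 hμ1 u hu_mono y₀ x₀ hy₀ X m hm⟩
  have hbY : BddAbove SY :=
    ⟨Finset.univ.sup' Finset.univ_nonempty Y - y₀, fun m hm =>
      shortfall_mem_le μ hμ0 hμ1 u hu_mono y₀ x₀ hy₀ Y m hm⟩
  set a := sSup SX
  set b := sSup SY
  apply csSup_le
  · exact ⟨_, shortfall_nonempty μ hμ0 hμ1 u hu_mono y₀ x₀ hy₀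
      (fun i => α * X i + (1 - α) * Y i)⟩
  intro m hm
  by_contra hcon
  push_neg at hcon
  set ε := m - (α * a + (1 - α) * b) with hε
  have hεpos : 0 < ε := by simp only [hε]; linarith
  set mX := a + ε with hmX
  set mY := b + ε with hmY
  have hXout : ∑ i, μ i * u (X i - mX) < x₀ := by
    by_contra h
    push_neg at h
    have : mX ≤ a := le_csSup hbX h
    simp only [hmX] at this; linarith
  have hYout : ∑ i, μ i * u (Y i - mY) < x₀ := by
    by_contra h
    push_neg at h
    have : mY ≤ b := le_csSup hbY h
    simp only [hmY] at this; linarith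
  have hpt : ∀ i, u (α * X i + (1 - α) * Y i - m) ≤
      α * u (X i - mX) + (1 - α) * u (Y i - mY) := by
    intro i
    have heq : α * X i + (1 - α) * Y i - m = α * (X i - mX) + (1 - α) * (Y i - mY) := by
      simp only [hmX, hmY, hε]; ring
    rw [heq]
    exact hu_conv.2 (Set.mem_univ _) (Set.mem_univ _) hα0 (by linarith) (by ring)
  have hsum : ∑ i, μ i * u (α * X i + (1 - α) * Y i - m) ≤
      α * ∑ i, μ i * u (X i - mX) + (1 - α) * ∑ i, μ i * u (Y i - mY) := by
    rw [Finset.mul_sum, Finset.mul_sum, ← Finset.sum_add_distrib]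
    apply Finset.sum_le_sum
    intro i _
    have := mul_le_mul_of_nonneg_left (hpt i) (hμ0 i)
    nlinarith [this]
  have hmem : x₀ ≤ ∑ i, μ i * u (α * X i + (1 - α) * Y i - m) := hm
  have hfin : α * ∑ i, μ i * u (X i - mX) + (1 - α) * ∑ i, μ i * u (Y i - mY) < x₀ := by
    have hmax : max (∑ i, μ i * u (X i - mX)) (∑ i, μ i * u (Y i - mY)) < x₀ :=
      max_lt hXout hYout
    have h1 := mul_le_mul_of_nonneg_left
      (le_max_left (∑ i, μ i * u (X i - mX)) (∑ i, μ i * u (Y i - mY))) hα0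
    have h2 := mul_le_mul_of_nonneg_left
      (le_max_right (∑ i, μ i * u (X i - mX)) (∑ i, μ i * u (Y i - mY)))
      (by linarith : (0:ℝ) ≤ 1 - α)
    nlinarith
  linarith
end

section
/- Let, for each (s,a) ∈ K, U_{s,a} : ((S × E) → ℝ) → ℝ be monotone (U_{s,a}(X) ≤ U_{s,a}(Y) whenever X ≤ Y pointwise) and translation invariant (U_{s,a}(X + y·𝟙) = U_{s,a}(X) + y for all y ∈ ℝ). Define the operator T on ℝ^S by T(V)(s) = max_{a ∈ A(s)} U_{s,a}( (s',ε) ↦ r(s,a,ε) + γ V(s') ). Then T is a γ-contraction in the sup-norm: max_{s∈S} |T(V)(s) − T(V')(s)| ≤ γ · max_{s∈S} |V(s) − V'(s)| for all V, V' : S → ℝ. -/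
/-- Let `U s a` be monotone and translation invariant for each
admissible state-action pair `(s, a)` (i.e. `a ∈ A s`). Then the operator
`T V s = max_{a ∈ A s} U s a ((s', ε) ↦ r s a ε + γ V s')` is a `γ`-contraction
in the sup-norm. -/
theorem stmt_9 {S Act E : Type*} [Fintype S] [Nonempty S]
    (A : S → Finset Act) (hA : ∀ s, (A s).Nonempty)
    (r : S → Act → E → ℝ) (γ : ℝ) (hγ0 : 0 ≤ γ) (hγ1 : γ < 1)
    (U : S → Act → ((S × E) → ℝ) → ℝ)
    (hmono : ∀ s, ∀ a ∈ A s, ∀ X Y : (S × E) → ℝ,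
      (∀ p, X p ≤ Y p) → U s a X ≤ U s a Y)
    (htrans : ∀ s, ∀ a ∈ A s, ∀ (X : (S × E) → ℝ) (y : ℝ),
      U s a (fun p => X p + y) = U s a X + y)
    (T : (S → ℝ) → S → ℝ)
    (hT : ∀ V s, T V s = (A s).sup' (hA s) fun a => U s a fun p => r s a p.2 + γ * V p.1)
    (V V' : S → ℝ) :
    (Finset.univ.sup' Finset.univ_nonempty fun s => |T V s - T V' s|) ≤
      γ * Finset.univ.sup' Finset.univ_nonempty fun s => |V s - V' s| := by
  set M := Finset.univ.sup' Finset.univ_nonempty fun s => |V s - V' s| with hMdef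
  have hM : ∀ t, |V t - V' t| ≤ M := fun t =>
    Finset.le_sup' (fun s => |V s - V' s|) (Finset.mem_univ t)
  have key : ∀ W W' : S → ℝ, (∀ t, W t - W' t ≤ M) → ∀ s, T W s - T W' s ≤ γ * M := by
    intro W W' hWW' s
    rw [hT, hT, sub_le_iff_le_add]
    apply Finset.sup'_le
    intro a ha
    have h1 : U s a (fun p => r s a p.2 + γ * W p.1)
        ≤ U s a (fun p => r s a p.2 + γ * W' p.1) + γ * M := by
      rw [← htrans s a ha]
      apply hmono s a ha
      intro p
      have := mul_le_mul_of_nonneg_left (hWW' p.1) hγ0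
      have h2 : γ * (W p.1 - W' p.1) ≤ γ * M := this
      nlinarith
    calc U s a (fun p => r s a p.2 + γ * W p.1)
        ≤ U s a (fun p => r s a p.2 + γ * W' p.1) + γ * M := h1
      _ ≤ ((A s).sup' (hA s) fun a => U s a fun p => r s a p.2 + γ * W' p.1) + γ * M :=
          add_le_add_left (Finset.le_sup' (fun a => U s a fun p => r s a p.2 + γ * W' p.1) ha) _
      _ = γ * M + (A s).sup' (hA s) fun a => U s a fun p => r s a p.2 + γ * W' p.1 :=
          add_comm _ _
  apply Finset.sup'_le
  intro s _
  rw [abs_sub_le_iff]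
  refine ⟨key V V' (fun t => (abs_le.mp (hM t)).2) s, ?_⟩
  exact key V' V (fun t => by have := (abs_le.mp (hM t)).1; linarith) s
end

section
/- Suppose u : ℝ → ℝ satisfies: there exist constants 0 < ε ≤ L such that ε ≤ (u(x) − u(y))/(x − y) ≤ L for all x ≠ y. Let 0 < α ≤ min(1/L, 1), let x₀ ∈ ℝ, and set ũ(x) := u(x) − x₀. Define the operator H on ℝ^K by (Hq)(s,a) = α · Σ_{s'∈S, ε∈E} P(s'|s,a) P_r(ε|s,a) · ũ( r(s,a,ε) + γ max_{a'∈A(s')} q(s',a') − q(s,a) ) + q(s,a). Then for all q, q' : K → ℝ, max_{(s,a)∈K} |(Hq)(s,a) − (Hq')(s,a)| ≤ (1 − α(1−γ)ε) · max_{(s,a)∈K} |q(s,a) − q'(s,a)|, and 1 − α(1−γ)ε ∈ [0, 1). -/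
/-- For a utility `u` with slopes in `[ε, L]` (`0 < ε ≤ L`),
a step size `0 < α ≤ min (1/L) 1` and `ũ x = u x − x₀`, the operator
`(Hq)(s,a) = α ∑_{s',e} P(s'|s,a) P_r(e|s,a) ũ(r(s,a,e) + γ max_{a' ∈ A s'} q(s',a') − q(s,a)) + q(s,a)`
is a contraction with modulus `1 − α(1−γ)ε ∈ [0,1)` in the sup-norm over the set `K`
of admissible state-action pairs. -/
theorem stmt_10 {S Act E : Type*} [Fintype S] [Nonempty S] [Fintype Act] [Fintype E]
    (A : S → Finset Act) (hA : ∀ s, (A s).Nonempty)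
    (P : S → Act → S → ℝ) (Pr : S → Act → E → ℝ) (r : S → Act → E → ℝ)
    (hP0 : ∀ s a s', 0 ≤ P s a s') (hP1 : ∀ s, ∀ a ∈ A s, ∑ s', P s a s' = 1)
    (hPr0 : ∀ s a e, 0 ≤ Pr s a e) (hPr1 : ∀ s, ∀ a ∈ A s, ∑ e, Pr s a e = 1)
    (γ : ℝ) (hγ0 : 0 ≤ γ) (hγ1 : γ < 1)
    (u : ℝ → ℝ) (ε L : ℝ) (hε : 0 < ε) (hεL : ε ≤ L)
    (hslope : ∀ x y : ℝ, x ≠ y → ε ≤ (u x - u y) / (x - y) ∧ (u x - u y) / (x - y) ≤ L)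
    (α : ℝ) (hα0 : 0 < α) (hα : α ≤ min (1 / L) 1) (x₀ : ℝ)
    (H : (S → Act → ℝ) → S → Act → ℝ)
    (hH : ∀ q s a, H q s a = α * (∑ s', ∑ e, P s a s' * Pr s a e *
        (u (r s a e + γ * (A s').sup' (hA s') (q s') - q s a) - x₀)) + q s a)
    (q q' : S → Act → ℝ)
    (hK : ((Finset.univ : Finset S).sigma fun s => A s).Nonempty) :
    ((((Finset.univ : Finset S).sigma fun s => A s).sup' hK
        fun p => |H q p.1 p.2 - H q' p.1 p.2|) ≤
      (1 - α * (1 - γ) * ε) *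
        (((Finset.univ : Finset S).sigma fun s => A s).sup' hK
          fun p => |q p.1 p.2 - q' p.1 p.2|)) ∧
    0 ≤ 1 - α * (1 - γ) * ε ∧ 1 - α * (1 - γ) * ε < 1 := by
  have hL : 0 < L := hε.trans_le hεL
  have hα1 : α ≤ 1 := hα.trans (min_le_right _ _)
  have hαL : α * L ≤ 1 := by
    have h := hα.trans (min_le_left _ _)
    have h2 : α * L ≤ (1 / L) * L := by nlinarith
    calc α * L ≤ (1 / L) * L := h2
      _ = 1 := by field_simp
  have hαε1 : α * ε ≤ 1 := by nlinarith
  have hmod0 : 0 ≤ 1 - α * (1 - γ) * ε := by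
    nlinarith [mul_nonneg (mul_nonneg hα0.le hε.le) hγ0]
  have hmod1 : 1 - α * (1 - γ) * ε < 1 := by
    have : 0 < α * (1 - γ) * ε := mul_pos (mul_pos hα0 (by linarith)) hε
    linarith
  refine ⟨?_, hmod0, hmod1⟩
  set K := ((Finset.univ : Finset S).sigma fun s => A s) with hKdef
  set M := K.sup' hK fun p => |q p.1 p.2 - q' p.1 p.2| with hMdef
  have hMle : ∀ s', ∀ a' ∈ A s', |q s' a' - q' s' a'| ≤ M := by
    intro s' a' ha'
    have hmem : (⟨s', a'⟩ : Σ _ : S, Act) ∈ K :=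
      Finset.mem_sigma.mpr ⟨Finset.mem_univ _, ha'⟩
    exact Finset.le_sup' (fun p : Σ _ : S, Act => |q p.1 p.2 - q' p.1 p.2|) hmem
  have hM0 : 0 ≤ M := by
    obtain ⟨p, hp⟩ := hK
    have hap : p.2 ∈ A p.1 := (Finset.mem_sigma.mp hp).2
    exact (abs_nonneg _).trans (hMle p.1 p.2 hap)
  have hm : ∀ s' : S, |(A s').sup' (hA s') (q s') - (A s').sup' (hA s') (q' s')| ≤ M := by
    intro s'
    rw [abs_le]
    constructor
    · rw [neg_le, neg_sub, sub_le_iff_le_add]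
      apply Finset.sup'_le
      intro a' ha'
      have h1 := (abs_le.mp (hMle s' a' ha')).1
      have h2 : q s' a' ≤ (A s').sup' (hA s') (q s') := Finset.le_sup' _ ha'
      linarith
    · rw [sub_le_iff_le_add]
      apply Finset.sup'_le
      intro a' ha'
      have h1 := (abs_le.mp (hMle s' a' ha')).2
      have h2 : q' s' a' ≤ (A s').sup' (hA s') (q' s') := Finset.le_sup' _ ha'
      linarith
  apply Finset.sup'_le
  rintro ⟨s, a⟩ hp
  have ha : a ∈ A s := (Finset.mem_sigma.mp hp).2
  set d := q s a - q' s a with hd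
  have hdM : |d| ≤ M := hMle s a ha
  have hd1 : -M ≤ d := (abs_le.mp hdM).1
  have hd2 : d ≤ M := (abs_le.mp hdM).2
  set m : S → ℝ := fun s' => (A s').sup' (hA s') (q s') - (A s').sup' (hA s') (q' s') with hmdef
  have hm1 : ∀ s', -M ≤ m s' := fun s' => (abs_le.mp (hm s')).1
  have hm2 : ∀ s', m s' ≤ M := fun s' => (abs_le.mp (hm s')).2
  set X : S → E → ℝ := fun s' e => r s a e + γ * (A s').sup' (hA s') (q s') - q s a with hX
  set X' : S → E → ℝ := fun s' e => r s a e + γ * (A s').sup' (hA s') (q' s') - q' s a with hX'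
  classical
  set c : S → E → ℝ := fun s' e =>
    if X s' e = X' s' e then ε else (u (X s' e) - u (X' s' e)) / (X s' e - X' s' e) with hc
  have hcb : ∀ s' e, ε ≤ c s' e ∧ c s' e ≤ L := by
    intro s' e
    by_cases h : X s' e = X' s' e
    · simp only [hc, if_pos h]; exact ⟨le_refl ε, hεL⟩
    · simp only [hc, if_neg h]; exact hslope _ _ h
  have huc : ∀ s' e, u (X s' e) - u (X' s' e) = c s' e * (X s' e - X' s' e) := by
    intro s' e
    by_cases h : X s' e = X' s' e
    · simp [h]
    · simp only [hc, if_neg h]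
      exact (div_mul_cancel₀ _ (sub_ne_zero_of_ne h)).symm
  have hXX : ∀ s' e, X s' e - X' s' e = γ * m s' - d := by
    intro s' e
    simp only [hX, hX', hmdef, hd]
    ring
  have hsum1 : ∑ s', ∑ e, P s a s' * Pr s a e = 1 := by
    have h1 : ∀ s', ∑ e, P s a s' * Pr s a e = P s a s' := by
      intro s'; rw [← Finset.mul_sum, hPr1 s a ha, mul_one]
    simp_rw [h1]
    exact hP1 s a ha
  have hHdiff : H q s a - H q' s a =
      ∑ s', ∑ e, P s a s' * Pr s a e * (α * (c s' e * (γ * m s' - d)) + d) := by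
    have expand : ∀ s' e, P s a s' * Pr s a e * (α * (c s' e * (γ * m s' - d)) + d) =
        (α * (P s a s' * Pr s a e * (u (X s' e) - x₀))
          - α * (P s a s' * Pr s a e * (u (X' s' e) - x₀)))
        + P s a s' * Pr s a e * d := by
      intro s' e
      have h1 := huc s' e
      rw [hXX s' e] at h1
      linear_combination (-(α * (P s a s' * Pr s a e))) * h1
    rw [hH, hH]
    simp_rw [expand, Finset.sum_add_distrib, Finset.sum_sub_distrib, ← Finset.mul_sum,
      ← Finset.sum_mul]
    rw [hsum1, one_mul]
    simp only [hX, hX', hd]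
    ring
  rw [hHdiff]
  calc |∑ s', ∑ e, P s a s' * Pr s a e * (α * (c s' e * (γ * m s' - d)) + d)|
      ≤ ∑ s', ∑ e, |P s a s' * Pr s a e * (α * (c s' e * (γ * m s' - d)) + d)| :=
        (Finset.abs_sum_le_sum_abs _ _).trans
          (Finset.sum_le_sum fun s' _ => Finset.abs_sum_le_sum_abs _ _)
    _ ≤ ∑ s', ∑ e, P s a s' * Pr s a e * ((1 - α * (1 - γ) * ε) * M) := by
        apply Finset.sum_le_sum; intro s' _
        apply Finset.sum_le_sum; intro e _
        have hw : 0 ≤ P s a s' * Pr s a e := mul_nonneg (hP0 _ _ _) (hPr0 _ _ _)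
        rw [abs_mul, abs_of_nonneg hw]
        apply mul_le_mul_of_nonneg_left _ hw
        obtain ⟨hc1, hc2⟩ := hcb s' e
        have hαc : α * c s' e ≤ 1 := by nlinarith
        have hge := hm1 s'
        have hle := hm2 s'
        have h3 : 0 ≤ α * (c s' e - ε) * ((1 - γ) * M) :=
          mul_nonneg (mul_nonneg hα0.le (by linarith)) (mul_nonneg (by linarith) hM0)
        rw [abs_le]
        constructor
        · have h1 : 0 ≤ α * c s' e * γ * (M + m s') :=
            mul_nonneg (mul_nonneg (mul_nonneg hα0.le (hε.le.trans hc1)) hγ0) (by linarith)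
          have h2 : 0 ≤ (1 - α * c s' e) * (M + d) :=
            mul_nonneg (by linarith) (by linarith)
          nlinarith [h1, h2, h3]
        · have h1 : 0 ≤ α * c s' e * γ * (M - m s') :=
            mul_nonneg (mul_nonneg (mul_nonneg hα0.le (hε.le.trans hc1)) hγ0) (by linarith)
          have h2 : 0 ≤ (1 - α * c s' e) * (M - d) :=
            mul_nonneg (by linarith) (by linarith)
          nlinarith [h1, h2, h3]
    _ = (1 - α * (1 - γ) * ε) * M := by
        simp_rw [← Finset.sum_mul]
        rw [hsum1, one_mul]
end

section
/- Suppose u : ℝ → ℝ satisfies there exist constants 0 < ε ≤ L with ε ≤ (u(x) − u(y))/(x − y) ≤ L for all x ≠ y, let x₀ ∈ ℝ, and suppose γ ∈ [0,1). Then the risk-sensitive optimality equation Σ_{s'∈S, ε∈E} P(s'|s,a) P_r(ε|s,a) · u( r(s,a,ε) + γ max_{a'∈A(s')} Q(s',a') − Q(s,a) ) = x₀ for all (s,a) ∈ K has a unique solution Q* : K → ℝ. -/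
open Finset Filter

section Aux
variable {u : ℝ → ℝ} {ε L : ℝ}

lemma u_lb (hslope : ∀ x y : ℝ, x ≠ y → ε ≤ (u x - u y) / (x - y) ∧ (u x - u y) / (x - y) ≤ L)
    {x y : ℝ} (h : y ≤ x) : ε * (x - y) ≤ u x - u y := by
  rcases eq_or_lt_of_le h with rfl | h
  · simp
  · have hxy : (0:ℝ) < x - y := by linarith
    have h1 := (hslope x y (by intro he; rw [he] at h; exact lt_irrefl _ h)).1
    have := (le_div_iff₀ hxy).1 h1
    linarith

lemma u_ub (hslope : ∀ x y : ℝ, x ≠ y → ε ≤ (u x - u y) / (x - y) ∧ (u x - u y) / (x - y) ≤ L)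
    {x y : ℝ} (h : y ≤ x) : u x - u y ≤ L * (x - y) := by
  rcases eq_or_lt_of_le h with rfl | h
  · simp
  · have hxy : (0:ℝ) < x - y := by linarith
    have h1 := (hslope x y (by intro he; rw [he] at h; exact lt_irrefl _ h)).2
    have := (div_le_iff₀ hxy).1 h1
    linarith

lemma u_mono (hε : 0 < ε)
    (hslope : ∀ x y : ℝ, x ≠ y → ε ≤ (u x - u y) / (x - y) ∧ (u x - u y) / (x - y) ≤ L) :
    Monotone u := fun x y h => by
  have := u_lb hslope h
  nlinarith

lemma u_cont (hε : 0 < ε) (hεL : ε ≤ L)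
    (hslope : ∀ x y : ℝ, x ≠ y → ε ≤ (u x - u y) / (x - y) ∧ (u x - u y) / (x - y) ≤ L) :
    Continuous u := by
  have hL : 0 ≤ L := le_trans hε.le hεL
  have : LipschitzWith (Real.toNNReal L) u := by
    apply LipschitzWith.of_dist_le_mul
    intro x y
    rw [Real.dist_eq, Real.dist_eq, Real.coe_toNNReal _ hL]
    rcases le_total y x with h | h
    · rw [abs_of_nonneg (sub_nonneg.2 (u_mono hε hslope h)),
        abs_of_nonneg (show (0:ℝ) ≤ x - y by linarith)]
      exact u_ub hslope h
    · rw [abs_of_nonpos (sub_nonpos.2 (u_mono hε hslope h)),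
        abs_of_nonpos (show x - y ≤ (0:ℝ) by linarith)]
      have := u_ub hslope h; linarith
  exact this.continuous

variable {ι : Type*} [Fintype ι]

/-- the key anti-monotonicity bound -/
lemma g_anti (hslope : ∀ x y : ℝ, x ≠ y → ε ≤ (u x - u y) / (x - y) ∧ (u x - u y) / (x - y) ≤ L)
    {w : ι → ℝ} (hw0 : ∀ i, 0 ≤ w i) (hw1 : ∑ i, w i = 1) (c : ι → ℝ)
    {t t' : ℝ} (h : t ≤ t') :
    (∑ i, w i * u (c i - t')) + ε * (t' - t) ≤ ∑ i, w i * u (c i - t) := by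
  have key : ∀ i ∈ Finset.univ (α := ι),
      w i * u (c i - t') + w i * (ε * (t' - t)) ≤ w i * u (c i - t) := by
    intro i _
    have h1 := u_lb hslope (show c i - t' ≤ c i - t by linarith)
    have h2 := hw0 i
    nlinarith
  have hs := Finset.sum_le_sum key
  rw [Finset.sum_add_distrib, ← Finset.sum_mul, hw1, one_mul] at hs
  exact hs

lemma root_unique
    (hslope : ∀ x y : ℝ, x ≠ y → ε ≤ (u x - u y) / (x - y) ∧ (u x - u y) / (x - y) ≤ L)
    (hε : 0 < ε) {w : ι → ℝ} (hw0 : ∀ i, 0 ≤ w i) (hw1 : ∑ i, w i = 1) (c : ι → ℝ)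
    {x₀ t t' : ℝ} (ht : ∑ i, w i * u (c i - t) = x₀) (ht' : ∑ i, w i * u (c i - t') = x₀) :
    t = t' := by
  rcases le_total t t' with h | h
  · have := g_anti hslope hw0 hw1 c h; rw [ht, ht'] at this; nlinarith
  · have := g_anti hslope hw0 hw1 c h; rw [ht, ht'] at this; nlinarith

lemma root_exists (hε : 0 < ε) (hεL : ε ≤ L)
    (hslope : ∀ x y : ℝ, x ≠ y → ε ≤ (u x - u y) / (x - y) ∧ (u x - u y) / (x - y) ≤ L)
    {w : ι → ℝ} (hw0 : ∀ i, 0 ≤ w i) (hw1 : ∑ i, w i = 1) (c : ι → ℝ) (x₀ : ℝ) :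
    ∃ t, ∑ i, w i * u (c i - t) = x₀ := by
  set g : ℝ → ℝ := fun t => ∑ i, w i * u (c i - t) with hg
  have hg_cont : Continuous g := by
    apply continuous_finset_sum
    intro i _
    exact continuous_const.mul ((u_cont hε hεL hslope).comp (continuous_const.sub continuous_id))
  have htop : Tendsto g atTop atBot := by
    have h1 : Tendsto (fun t : ℝ => g 0 + -(ε * t)) atTop atBot :=
      tendsto_atBot_add_const_left atTop (g 0)
        (tendsto_neg_atTop_atBot.comp (Tendsto.const_mul_atTop hε tendsto_id))
    apply tendsto_atBot_mono' atTop _ h1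
    filter_upwards [eventually_ge_atTop (0:ℝ)] with t ht
    have := g_anti hslope hw0 hw1 c ht
    simp only [sub_zero] at this
    simp only [hg, sub_zero]
    linarith
  have hbot : Tendsto g atBot atTop := by
    have h1 : Tendsto (fun t : ℝ => g 0 + -(ε * t)) atBot atTop :=
      tendsto_atTop_add_const_left atBot (g 0)
        (tendsto_neg_atBot_atTop.comp (Tendsto.const_mul_atBot hε tendsto_id))
    apply tendsto_atTop_mono' atBot _ h1
    filter_upwards [eventually_le_atBot (0:ℝ)] with t ht
    have := g_anti hslope hw0 hw1 c ht
    simp only [sub_zero] at this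
    simp only [hg, sub_zero]
    linarith
  obtain ⟨a, ha⟩ := (htop.eventually (eventually_le_atBot x₀)).exists
  obtain ⟨b, hb⟩ := (hbot.eventually (eventually_ge_atTop x₀)).exists
  have hsub := intermediate_value_uIcc (a := a) (b := b) (hg_cont.continuousOn)
  have hmem : x₀ ∈ Set.uIcc (g a) (g b) := Set.mem_uIcc.2 (Or.inl ⟨ha, hb⟩)
  obtain ⟨t, _, ht⟩ := hsub hmem
  exact ⟨t, ht⟩

lemma root_le_add (hε : 0 < ε)
    (hslope : ∀ x y : ℝ, x ≠ y → ε ≤ (u x - u y) / (x - y) ∧ (u x - u y) / (x - y) ≤ L)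
    {w : ι → ℝ} (hw0 : ∀ i, 0 ≤ w i) (hw1 : ∑ i, w i = 1) {c c' : ι → ℝ} {δ t t' x₀ : ℝ}
    (hδ : ∀ i, c' i ≤ c i + δ)
    (ht : ∑ i, w i * u (c i - t) = x₀) (ht' : ∑ i, w i * u (c' i - t') = x₀) :
    t' ≤ t + δ := by
  have hkey : ∑ i, w i * u (c' i - (t + δ)) ≤ x₀ := by
    rw [← ht]
    apply Finset.sum_le_sum
    intro i _
    exact mul_le_mul_of_nonneg_left
      (u_mono hε hslope (show c' i - (t + δ) ≤ c i - t by have := hδ i; linarith)) (hw0 i)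
  by_contra hc
  push_neg at hc
  have := g_anti hslope hw0 hw1 c' (le_of_lt hc)
  rw [ht'] at this
  nlinarith

end Aux

open Classical in
noncomputable def rootOf (g : ℝ → ℝ) (x₀ : ℝ) : ℝ :=
  if h : ∃ t, g t = x₀ then h.choose else 0

lemma rootOf_spec {g : ℝ → ℝ} {x₀ : ℝ} (h : ∃ t, g t = x₀) : g (rootOf g x₀) = x₀ := by
  classical
  rw [rootOf, dif_pos h]
  exact h.choose_spec

lemma sup'_abs_sub_le {α : Type*} (A : Finset α) (hA : A.Nonempty) (f g : α → ℝ) {d : ℝ}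
    (h : ∀ a ∈ A, |f a - g a| ≤ d) : |A.sup' hA f - A.sup' hA g| ≤ d := by
  rw [abs_sub_le_iff]
  constructor
  · have h1 : A.sup' hA f ≤ A.sup' hA g + d := by
      apply Finset.sup'_le
      intro a ha
      have := (abs_sub_le_iff.1 (h a ha)).1
      have := Finset.le_sup' g ha
      linarith
    linarith
  · have h1 : A.sup' hA g ≤ A.sup' hA f + d := by
      apply Finset.sup'_le
      intro a ha
      have := (abs_sub_le_iff.1 (h a ha)).2
      have := Finset.le_sup' f ha
      linarith
    linarith



/-- For a utility `u` with slopes in `[ε, L]` (`0 < ε ≤ L`) and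
`γ ∈ [0,1)`, the risk-sensitive optimality equation
`∑_{s',e} P(s'|s,a) P_r(e|s,a) u(r(s,a,e) + γ max_{a' ∈ A s'} Q(s',a') − Q(s,a)) = x₀`
for all admissible `(s,a)` has a solution, and the solution is unique on the set of
admissible state-action pairs. -/
theorem stmt_11 {S Act E : Type*} [Fintype S] [Nonempty S] [Fintype Act] [Fintype E]
    (A : S → Finset Act) (hA : ∀ s, (A s).Nonempty)
    (P : S → Act → S → ℝ) (Pr : S → Act → E → ℝ) (r : S → Act → E → ℝ)
    (hP0 : ∀ s a s', 0 ≤ P s a s') (hP1 : ∀ s, ∀ a ∈ A s, ∑ s', P s a s' = 1)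
    (hPr0 : ∀ s a e, 0 ≤ Pr s a e) (hPr1 : ∀ s, ∀ a ∈ A s, ∑ e, Pr s a e = 1)
    (γ : ℝ) (hγ0 : 0 ≤ γ) (hγ1 : γ < 1)
    (u : ℝ → ℝ) (ε L : ℝ) (hε : 0 < ε) (hεL : ε ≤ L)
    (hslope : ∀ x y : ℝ, x ≠ y → ε ≤ (u x - u y) / (x - y) ∧ (u x - u y) / (x - y) ≤ L)
    (x₀ : ℝ) :
    (∃ Q : S → Act → ℝ, ∀ s, ∀ a ∈ A s,
      ∑ s', ∑ e, P s a s' * Pr s a e *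
        u (r s a e + γ * (A s').sup' (hA s') (Q s') - Q s a) = x₀) ∧
    (∀ Q Q' : S → Act → ℝ,
      (∀ s, ∀ a ∈ A s, ∑ s', ∑ e, P s a s' * Pr s a e *
        u (r s a e + γ * (A s').sup' (hA s') (Q s') - Q s a) = x₀) →
      (∀ s, ∀ a ∈ A s, ∑ s', ∑ e, P s a s' * Pr s a e *
        u (r s a e + γ * (A s').sup' (hA s') (Q' s') - Q' s a) = x₀) →
      ∀ s, ∀ a ∈ A s, Q s a = Q' s a) := by
  classical
  set w : S → Act → S × E → ℝ := fun s a i => P s a i.1 * Pr s a i.2 with hw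
  have hw0 : ∀ s a i, 0 ≤ w s a i := fun s a i => mul_nonneg (hP0 _ _ _) (hPr0 _ _ _)
  have hw1 : ∀ s, ∀ a ∈ A s, ∑ i : S × E, w s a i = 1 := by
    intro s a ha
    rw [Fintype.sum_prod_type]
    simp only [hw, ← Finset.mul_sum, hPr1 s a ha, mul_one]
    exact hP1 s a ha
  set c : (S → Act → ℝ) → S → Act → S × E → ℝ :=
    fun Q s a i => r s a i.2 + γ * (A i.1).sup' (hA i.1) (Q i.1) with hc
  have hgeq : ∀ (Q : S → Act → ℝ) s a (t : ℝ),
      ∑ s', ∑ e, P s a s' * Pr s a e *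
        u (r s a e + γ * (A s').sup' (hA s') (Q s') - t)
      = ∑ i : S × E, w s a i * u (c Q s a i - t) := by
    intro Q s a t
    rw [Fintype.sum_prod_type]
  set T : (S → Act → ℝ) → S → Act → ℝ := fun Q s a =>
    if a ∈ A s then rootOf (fun t => ∑ i : S × E, w s a i * u (c Q s a i - t)) x₀ else 0
    with hT
  have hex : ∀ (Q : S → Act → ℝ) s a, a ∈ A s →
      ∃ t, ∑ i : S × E, w s a i * u (c Q s a i - t) = x₀ :=
    fun Q s a ha => root_exists hε hεL hslope (hw0 s a) (hw1 s a ha) _ x₀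
  have hTspec : ∀ (Q : S → Act → ℝ) s a, a ∈ A s →
      ∑ i : S × E, w s a i * u (c Q s a i - T Q s a) = x₀ := by
    intro Q s a ha
    simp only [hT, if_pos ha]
    exact rootOf_spec (hex Q s a ha)
  -- the contraction estimate
  have key : ∀ Q Q' : S → Act → ℝ, dist (T Q) (T Q') ≤ γ * dist Q Q' := by
    intro Q Q'
    rw [dist_pi_le_iff (mul_nonneg hγ0 dist_nonneg)]
    intro s
    rw [dist_pi_le_iff (mul_nonneg hγ0 dist_nonneg)]
    intro a
    by_cases ha : a ∈ A s
    · have hcc : ∀ i : S × E, |c Q s a i - c Q' s a i| ≤ γ * dist Q Q' := by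
        intro i
        simp only [hc]
        rw [show r s a i.2 + γ * (A i.1).sup' (hA i.1) (Q i.1) -
            (r s a i.2 + γ * (A i.1).sup' (hA i.1) (Q' i.1)) =
            γ * ((A i.1).sup' (hA i.1) (Q i.1) - (A i.1).sup' (hA i.1) (Q' i.1)) by ring,
          abs_mul, abs_of_nonneg hγ0]
        apply mul_le_mul_of_nonneg_left _ hγ0
        apply sup'_abs_sub_le
        intro a' ha'
        calc |Q i.1 a' - Q' i.1 a'| = dist (Q i.1 a') (Q' i.1 a') := (Real.dist_eq _ _).symm
          _ ≤ dist (Q i.1) (Q' i.1) := dist_le_pi_dist _ _ _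
          _ ≤ dist Q Q' := dist_le_pi_dist _ _ _
      simp only [hT, if_pos ha]
      rw [Real.dist_eq, abs_sub_le_iff]
      have h1 := rootOf_spec (hex Q s a ha)
      have h2 := rootOf_spec (hex Q' s a ha)
      constructor
      · have := root_le_add hε hslope (hw0 s a) (hw1 s a ha)
          (c := c Q' s a) (c' := c Q s a) (δ := γ * dist Q Q')
          (fun i => by have := (abs_sub_le_iff.1 (hcc i)).1; linarith) h2 h1
        linarith
      · have := root_le_add hε hslope (hw0 s a) (hw1 s a ha)
          (c := c Q s a) (c' := c Q' s a) (δ := γ * dist Q Q')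
          (fun i => by have := (abs_sub_le_iff.1 (hcc i)).2; linarith) h1 h2
        linarith
    · simp only [hT, if_neg ha]
      simpa using mul_nonneg hγ0 (dist_nonneg (x := Q) (y := Q'))
  refine ⟨?_, ?_⟩
  · -- existence via Banach fixed point
    have hlip : LipschitzWith (Real.toNNReal γ) T := by
      apply LipschitzWith.of_dist_le_mul
      intro Q Q'
      rw [Real.coe_toNNReal _ hγ0]
      exact key Q Q'
    have hK1 : Real.toNNReal γ < 1 := by
      have h : (Real.toNNReal γ : ℝ) < 1 := by rwa [Real.coe_toNNReal _ hγ0]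
      exact_mod_cast h
    have hcontr : ContractingWith (Real.toNNReal γ) T := ⟨hK1, hlip⟩
    set Qs := ContractingWith.fixedPoint T hcontr with hQs
    have hfix : T Qs = Qs := ContractingWith.fixedPoint_isFixedPt hcontr
    refine ⟨Qs, fun s a ha => ?_⟩
    rw [hgeq Qs s a (Qs s a)]
    have h := hTspec Qs s a ha
    rwa [hfix] at h
  · -- uniqueness
    intro Q Q' hQ hQ' s a ha
    set Qb : S → Act → ℝ := fun s a => if a ∈ A s then Q s a else 0 with hQb
    set Qb' : S → Act → ℝ := fun s a => if a ∈ A s then Q' s a else 0 with hQb'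
    have hsup : ∀ (R : S → Act → ℝ) (s' : S),
        (A s').sup' (hA s') (fun a' => if a' ∈ A s' then R s' a' else 0)
          = (A s').sup' (hA s') (R s') :=
      fun R s' => Finset.sup'_congr (hA s') rfl (fun a' ha' => by simp [ha'])
    have hfixgen : ∀ (R : S → Act → ℝ),
        (∀ s, ∀ a ∈ A s, ∑ s', ∑ e, P s a s' * Pr s a e *
          u (r s a e + γ * (A s').sup' (hA s') (R s') - R s a) = x₀) →
        T (fun s a => if a ∈ A s then R s a else 0)
          = (fun s a => if a ∈ A s then R s a else 0) := by
      intro R hR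
      funext s' a'
      by_cases ha' : a' ∈ A s'
      · have h1 := hTspec (fun s a => if a ∈ A s then R s a else 0) s' a' ha'
        have h2 : ∑ i : S × E, w s' a' i *
            u (c (fun s a => if a ∈ A s then R s a else 0) s' a' i -
              (fun s a => if a ∈ A s then R s a else 0) s' a') = x₀ := by
          have hh := hR s' a' ha'
          rw [hgeq R s' a' (R s' a')] at hh
          calc ∑ i : S × E, w s' a' i *
              u (c (fun s a => if a ∈ A s then R s a else 0) s' a' i -
                (fun s a => if a ∈ A s then R s a else 0) s' a')
              = ∑ i : S × E, w s' a' i * u (c R s' a' i - R s' a') := by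
                apply Finset.sum_congr rfl
                intro i _
                have e1 : c (fun s a => if a ∈ A s then R s a else 0) s' a' i
                    = c R s' a' i := by
                  simp only [hc]
                  rw [hsup R i.1]
                have e2 : (fun (s : S) (a : Act) => if a ∈ A s then R s a else 0) s' a'
                    = R s' a' := by simp [ha']
                rw [e1, e2]
            _ = x₀ := hh
        have := root_unique hslope hε (hw0 s' a') (hw1 s' a' ha')
          (c (fun s a => if a ∈ A s then R s a else 0) s' a') h1 h2
        simpa [hT, ha'] using this
      · simp [hT, ha']
    have hfb := hfixgen Q hQ
    have hfb' := hfixgen Q' hQ'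
    rw [← hQb] at hfb
    rw [← hQb'] at hfb'
    have hd : dist Qb Qb' ≤ γ * dist Qb Qb' := by
      calc dist Qb Qb' = dist (T Qb) (T Qb') := by rw [hfb, hfb']
        _ ≤ γ * dist Qb Qb' := key Qb Qb'
    have h0 : dist Qb Qb' = 0 := by
      have hnn : (0:ℝ) ≤ dist Qb Qb' := dist_nonneg
      nlinarith
    have heq : Qb = Qb' := eq_of_dist_eq_zero h0
    have := congrFun (congrFun heq s) a
    simpa [hQb, hQb', ha] using this
end

section
/- Suppose u : ℝ → ℝ is strictly increasing with u(y₀) = x₀ for some y₀ ∈ ℝ, the rewards are bounded by R̄ := sup_{(s,a)∈K, ε∈E} |r(s,a,ε)| < ∞, and γ ∈ [0,1). Then every solution Q : K → ℝ of the risk-sensitive optimality equation Σ_{s'∈S, ε∈E} P(s'|s,a) P_r(ε|s,a) · u( r(s,a,ε) + γ max_{a'∈A(s')} Q(s',a') − Q(s,a) ) = x₀ for all (s,a) ∈ K satisfies (−R̄ − y₀)/(1−γ) ≤ Q(s,a) ≤ (R̄ − y₀)/(1−γ) for all (s,a) ∈ K. -/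
lemma aux_exists_13 {ι : Type*} [Fintype ι] (w f : ι → ℝ) (hw : ∀ i, 0 ≤ w i)
    (hw1 : ∑ i, w i = 1) (u : ℝ → ℝ) (hu : StrictMono u) (y₀ : ℝ)
    (hsum : ∑ i, w i * u (f i) = u y₀) :
    (∃ i, 0 < w i ∧ y₀ ≤ f i) ∧ (∃ i, 0 < w i ∧ f i ≤ y₀) := by
  have hi₀ : ∃ i₀ : ι, 0 < w i₀ := by
    by_contra h
    push_neg at h
    have : ∀ i : ι, w i = 0 := fun i => le_antisymm (h i) (hw i)
    simp [this] at hw1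
  obtain ⟨i₀, hi₀⟩ := hi₀
  constructor
  · by_contra h
    push_neg at h
    have hlt : ∑ i, w i * u (f i) < ∑ i, w i * u y₀ := by
      apply Finset.sum_lt_sum
      · intro i _
        rcases (hw i).lt_or_eq with hpos | hz
        · exact mul_le_mul_of_nonneg_left (hu (h i hpos)).le (hw i)
        · rw [← hz]; simp
      · exact ⟨i₀, Finset.mem_univ _,
          mul_lt_mul_of_pos_left (hu (h i₀ hi₀)) hi₀⟩
    rw [hsum, ← Finset.sum_mul, hw1, one_mul] at hlt
    exact lt_irrefl _ hlt
  · by_contra h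
    push_neg at h
    have hlt : ∑ i, w i * u y₀ < ∑ i, w i * u (f i) := by
      apply Finset.sum_lt_sum
      · intro i _
        rcases (hw i).lt_or_eq with hpos | hz
        · exact mul_le_mul_of_nonneg_left (hu (h i hpos)).le (hw i)
        · rw [← hz]; simp
      · exact ⟨i₀, Finset.mem_univ _,
          mul_lt_mul_of_pos_left (hu (h i₀ hi₀)) hi₀⟩
    rw [hsum, ← Finset.sum_mul, hw1, one_mul] at hlt
    exact lt_irrefl _ hlt

/-- If `u` is strictly increasing with `u y₀ = x₀`, the rewards are
bounded in absolute value by `Rbar`, and `γ ∈ [0,1)`, then every solution `Q` of the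
risk-sensitive optimality equation satisfies
`(−Rbar − y₀)/(1−γ) ≤ Q(s,a) ≤ (Rbar − y₀)/(1−γ)` for all admissible `(s,a)`. -/
theorem stmt_13 {S Act E : Type*} [Fintype S] [Nonempty S] [Fintype Act] [Fintype E]
    [Nonempty E]
    (A : S → Finset Act) (hA : ∀ s, (A s).Nonempty)
    (P : S → Act → S → ℝ) (Pr : S → Act → E → ℝ) (r : S → Act → E → ℝ)
    (hP0 : ∀ s a s', 0 ≤ P s a s') (hP1 : ∀ s, ∀ a ∈ A s, ∑ s', P s a s' = 1)
    (hPr0 : ∀ s a e, 0 ≤ Pr s a e) (hPr1 : ∀ s, ∀ a ∈ A s, ∑ e, Pr s a e = 1)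
    (γ : ℝ) (hγ0 : 0 ≤ γ) (hγ1 : γ < 1)
    (u : ℝ → ℝ) (hu_mono : StrictMono u) (y₀ x₀ : ℝ) (hy₀ : u y₀ = x₀)
    (Rbar : ℝ) (hRbar : ∀ s, ∀ a ∈ A s, ∀ e : E, |r s a e| ≤ Rbar)
    (Q : S → Act → ℝ)
    (hQ : ∀ s, ∀ a ∈ A s, ∑ s', ∑ e, P s a s' * Pr s a e *
      u (r s a e + γ * (A s').sup' (hA s') (Q s') - Q s a) = x₀) :
    ∀ s, ∀ a ∈ A s, (-Rbar - y₀) / (1 - γ) ≤ Q s a ∧ Q s a ≤ (Rbar - y₀) / (1 - γ) := by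
  classical
  set T : Finset (S × Act) := Finset.univ.filter (fun p => p.2 ∈ A p.1) with hT
  have hTmem : ∀ p : S × Act, p ∈ T ↔ p.2 ∈ A p.1 := by
    intro p; simp [hT]
  have hTne : T.Nonempty := by
    obtain ⟨s⟩ := ‹Nonempty S›
    obtain ⟨a, ha⟩ := hA s
    exact ⟨(s, a), (hTmem (s, a)).2 ha⟩
  set M := T.sup' hTne (fun p => Q p.1 p.2) with hM
  set m := T.inf' hTne (fun p => Q p.1 p.2) with hm
  have hFM : ∀ s', (A s').sup' (hA s') (Q s') ≤ M := by
    intro s'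
    apply Finset.sup'_le
    intro a' ha'
    exact Finset.le_sup' (f := fun p : S × Act => Q p.1 p.2) ((hTmem (s', a')).2 ha')
  have hFm : ∀ s', m ≤ (A s').sup' (hA s') (Q s') := by
    intro s'
    obtain ⟨a', ha'⟩ := hA s'
    exact le_trans (Finset.inf'_le (f := fun p : S × Act => Q p.1 p.2)
      ((hTmem (s', a')).2 ha')) (Finset.le_sup' _ ha')
  have key : ∀ s, ∀ a ∈ A s,
      Q s a ≤ Rbar + γ * M - y₀ ∧ -Rbar + γ * m - y₀ ≤ Q s a := by
    intro s a ha
    have hsum : ∑ p : S × E, (P s a p.1 * Pr s a p.2) *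
        u (r s a p.2 + γ * (A p.1).sup' (hA p.1) (Q p.1) - Q s a) = u y₀ := by
      rw [Fintype.sum_prod_type, hy₀]
      exact hQ s a ha
    have hw1 : ∑ p : S × E, P s a p.1 * Pr s a p.2 = 1 := by
      rw [Fintype.sum_prod_type]
      simp only [← Finset.sum_mul, ← Finset.mul_sum]
      rw [hP1 s a ha, hPr1 s a ha, one_mul]
    obtain ⟨⟨p₁, hp₁, hp₁'⟩, ⟨p₂, hp₂, hp₂'⟩⟩ :=
      aux_exists_13 (fun p : S × E => P s a p.1 * Pr s a p.2)
        (fun p : S × E => r s a p.2 + γ * (A p.1).sup' (hA p.1) (Q p.1) - Q s a)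
        (fun p => mul_nonneg (hP0 s a p.1) (hPr0 s a p.2)) hw1 u hu_mono y₀ hsum
    constructor
    · -- upper: y₀ ≤ r + γ F - Q  gives  Q ≤ r + γ F - y₀ ≤ Rbar + γ M - y₀
      have hr : r s a p₁.2 ≤ Rbar := (abs_le.1 (hRbar s a ha p₁.2)).2
      have hF : γ * (A p₁.1).sup' (hA p₁.1) (Q p₁.1) ≤ γ * M :=
        mul_le_mul_of_nonneg_left (hFM p₁.1) hγ0
      linarith
    · have hr : -Rbar ≤ r s a p₂.2 := (abs_le.1 (hRbar s a ha p₂.2)).1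
      have hF : γ * m ≤ γ * (A p₂.1).sup' (hA p₂.1) (Q p₂.1) :=
        mul_le_mul_of_nonneg_left (hFm p₂.1) hγ0
      linarith
  have h1γ : 0 < 1 - γ := by linarith
  obtain ⟨pM, hpM, hpMeq⟩ := Finset.exists_mem_eq_sup' hTne (fun p : S × Act => Q p.1 p.2)
  obtain ⟨pm, hpm, hpmeq⟩ := Finset.exists_mem_eq_inf' hTne (fun p : S × Act => Q p.1 p.2)
  have hMle : M ≤ (Rbar - y₀) / (1 - γ) := by
    have := (key pM.1 pM.2 ((hTmem pM).1 hpM)).1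
    rw [← hpMeq] at this
    rw [le_div_iff₀ h1γ]
    nlinarith
  have hmge : (-Rbar - y₀) / (1 - γ) ≤ m := by
    have := (key pm.1 pm.2 ((hTmem pm).1 hpm)).2
    rw [← hpmeq] at this
    rw [div_le_iff₀ h1γ]
    nlinarith
  intro s a ha
  have hQM : Q s a ≤ M := Finset.le_sup' (f := fun p : S × Act => Q p.1 p.2)
    ((hTmem (s, a)).2 ha)
  have hQm : m ≤ Q s a := Finset.inf'_le (f := fun p : S × Act => Q p.1 p.2)
    ((hTmem (s, a)).2 ha)
  exact ⟨le_trans hmge hQm, le_trans hQM hMle⟩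
end
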